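/- arXiv:2603.24951 — 4 statements merged into one kernel-verified Lean document; each statement's English description precedes it below -/
import Mathlib

section
/- Let Ω ⊆ ℝⁿ be an open convex set and Ω₀ ⊆ Ω a Lebesgue measurable set with μ(Ω \ Ω₀) = 0, where μ is Lebesgue measure on ℝⁿ. Let a, b ∈ Ω be distinct points. Then there exist sequences (aᵏ) ⊆ Ω and (bᵏ) ⊆ Ω with aᵏ → a and bᵏ → b such that for every k, the one-dimensional Lebesgue measure of the set {t ∈ [0,1] : aᵏ + t(bᵏ − aᵏ) ∈ Ω₀} equals 1. -/
open scoped RealInnerProductSpace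
open Filter Topology MeasureTheory Set

noncomputable section

variable {n : ℕ}

/-- Convexity of an extended-real-valued function `φ : ℝⁿ → ℝ ∪ {+∞}`. -/
def ERealConvex {F : Type*} [AddCommGroup F] [Module ℝ F] (φ : F → EReal) : Prop :=
  ∀ x y : F, ∀ a b : ℝ, 0 ≤ a → 0 ≤ b → a + b = 1 →
    φ (a • x + b • y) ≤ (a : EReal) * φ x + (b : EReal) * φ y

/-- The shifted function `x ↦ φ(x) + (ρ/2)‖x‖²`. -/
def shiftFun (ρ : ℝ) (φ : EuclideanSpace ℝ (Fin n) → EReal) :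
    EuclideanSpace ℝ (Fin n) → EReal :=
  fun x => φ x + (((ρ / 2) * ‖x‖ ^ 2 : ℝ) : EReal)

/-- The subdifferential of a `ρ`-weakly convex function. -/
def subdiff (ρ : ℝ) (φ : EuclideanSpace ℝ (Fin n) → EReal)
    (x : EuclideanSpace ℝ (Fin n)) : Set (EuclideanSpace ℝ (Fin n)) :=
  {v | φ x ≠ ⊤ ∧
    ∀ u, φ x + ((⟪v, u - x⟫ - (ρ / 2) * ‖u - x‖ ^ 2 : ℝ) : EReal) ≤ φ u}

/-- Graph of the subdifferential mapping. -/
def gphSubdiff (ρ : ℝ) (φ : EuclideanSpace ℝ (Fin n) → EReal) :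
    Set (EuclideanSpace ℝ (Fin n) × EuclideanSpace ℝ (Fin n)) :=
  {p | p.2 ∈ subdiff ρ φ p.1}

/-- The (Bouligand–Severi) tangent/contingent cone to `S` at `z`. -/
def contTangentCone {F : Type*} [NormedAddCommGroup F] [NormedSpace ℝ F]
    (S : Set F) (z : F) : Set F :=
  {w | ∃ (t : ℕ → ℝ) (ws : ℕ → F), (∀ k, 0 < t k) ∧ Tendsto t atTop (𝓝 0) ∧
    Tendsto ws atTop (𝓝 w) ∧ ∀ k, z + t k • ws k ∈ S}

/-- Inner product of pairs in `ℝⁿ × ℝⁿ`. -/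
def pairInner (p q : EuclideanSpace ℝ (Fin n) × EuclideanSpace ℝ (Fin n)) : ℝ :=
  ⟪p.1, q.1⟫ + ⟪p.2, q.2⟫

/-- The (Fréchet) regular normal cone to `S` at `z`. -/
def regNormalCone (S : Set (EuclideanSpace ℝ (Fin n) × EuclideanSpace ℝ (Fin n)))
    (z : EuclideanSpace ℝ (Fin n) × EuclideanSpace ℝ (Fin n)) :
    Set (EuclideanSpace ℝ (Fin n) × EuclideanSpace ℝ (Fin n)) :=
  {v | ∀ ε > (0 : ℝ), ∃ δ > (0 : ℝ), ∀ u ∈ S, ‖u - z‖ < δ →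
      pairInner v (u - z) ≤ ε * ‖u - z‖}

/-- The (Mordukhovich) limiting normal cone to `S` at `z`. -/
def limNormalCone (S : Set (EuclideanSpace ℝ (Fin n) × EuclideanSpace ℝ (Fin n)))
    (z : EuclideanSpace ℝ (Fin n) × EuclideanSpace ℝ (Fin n)) :
    Set (EuclideanSpace ℝ (Fin n) × EuclideanSpace ℝ (Fin n)) :=
  {v | ∃ zs vs : ℕ → EuclideanSpace ℝ (Fin n) × EuclideanSpace ℝ (Fin n),
    (∀ k, zs k ∈ S) ∧ Tendsto zs atTop (𝓝 z) ∧ Tendsto vs atTop (𝓝 v) ∧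
    ∀ k, vs k ∈ regNormalCone S (zs k)}

/-- The Moreau envelope `e_λ φ`. -/
def moreau (lam : ℝ) (φ : EuclideanSpace ℝ (Fin n) → EReal)
    (x : EuclideanSpace ℝ (Fin n)) : EReal :=
  ⨅ y, (φ y + ((‖y - x‖ ^ 2 / (2 * lam) : ℝ) : EReal))

/-- Second-order difference quotient `Δ²_τ φ(x,v)(u)`. -/
def delta2 (φ : EuclideanSpace ℝ (Fin n) → EReal) (x v : EuclideanSpace ℝ (Fin n))
    (τ : ℝ) (u : EuclideanSpace ℝ (Fin n)) : EReal :=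
  ((2 / τ ^ 2 : ℝ) : EReal) * (φ (x + τ • u) - φ x - ((τ * ⟪v, u⟫ : ℝ) : EReal))

/-- The second subderivative `d²φ(x,v)(w)`. -/
def secondSubderiv (φ : EuclideanSpace ℝ (Fin n) → EReal)
    (x v w : EuclideanSpace ℝ (Fin n)) : EReal :=
  Filter.liminf (fun p : ℝ × EuclideanSpace ℝ (Fin n) => delta2 φ x v p.1 p.2)
    ((𝓝[>] (0 : ℝ)) ×ˢ 𝓝 w)

/-- Twice epi-differentiability of `φ` at `x` for `v`. -/
def TwiceEpiDiff (φ : EuclideanSpace ℝ (Fin n) → EReal)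
    (x v : EuclideanSpace ℝ (Fin n)) : Prop :=
  ∀ w : EuclideanSpace ℝ (Fin n), ∀ τ : ℕ → ℝ, (∀ k, 0 < τ k) →
    Tendsto τ atTop (𝓝 0) →
    ∃ ws : ℕ → EuclideanSpace ℝ (Fin n), Tendsto ws atTop (𝓝 w) ∧
      Tendsto (fun k => delta2 φ x v (τ k) (ws k)) atTop (𝓝 (secondSubderiv φ x v w))

/-- Generalized twice differentiability of `φ` at `x` for `v`. -/
def GenTwiceDiff (φ : EuclideanSpace ℝ (Fin n) → EReal)
    (x v : EuclideanSpace ℝ (Fin n)) : Prop :=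
  TwiceEpiDiff φ x v ∧
    ∃ (A : EuclideanSpace ℝ (Fin n) →ₗ[ℝ] EuclideanSpace ℝ (Fin n))
      (L : Submodule ℝ (EuclideanSpace ℝ (Fin n))),
      (∀ u w, ⟪A u, w⟫ = ⟪u, A w⟫) ∧
      (∀ w ∈ L, secondSubderiv φ x v w = ((⟪w, A w⟫ : ℝ) : EReal)) ∧
      (∀ w ∉ L, secondSubderiv φ x v w = (⊤ : EReal))

/-- approximating segments meeting a full-measure subset of an open
convex set in a set of full one-dimensional measure. -/
theorem statement2 (n : ℕ) (Ω Ω₀ : Set (EuclideanSpace ℝ (Fin n)))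
    (hopen : IsOpen Ω) (hconv : Convex ℝ Ω) (hsub : Ω₀ ⊆ Ω)
    (hmeas : MeasurableSet Ω₀) (hnull : volume (Ω \ Ω₀) = 0)
    (a b : EuclideanSpace ℝ (Fin n)) (ha : a ∈ Ω) (hb : b ∈ Ω) (hab : a ≠ b) :
    ∃ aseq bseq : ℕ → EuclideanSpace ℝ (Fin n),
      (∀ k, aseq k ∈ Ω) ∧ (∀ k, bseq k ∈ Ω) ∧
      Tendsto aseq atTop (𝓝 a) ∧ Tendsto bseq atTop (𝓝 b) ∧
      ∀ k, volume {t : ℝ | t ∈ Icc (0 : ℝ) 1 ∧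
        aseq k + t • (bseq k - aseq k) ∈ Ω₀} = 1 := by
  classical
  set d : EuclideanSpace ℝ (Fin n) := b - a with hd
  set N : Set (EuclideanSpace ℝ (Fin n)) := Ω \ Ω₀ with hNdef
  have hNmeas : MeasurableSet N := hopen.measurableSet.diff hmeas
  have hN0 : volume N = 0 := hnull
  -- Fubini: a.e. line in direction d meets N in a null set
  set S : Set (EuclideanSpace ℝ (Fin n) × ℝ) := {p | p.1 + p.2 • d ∈ N} with hSdef
  set T : Set (ℝ × EuclideanSpace ℝ (Fin n)) := {q | q.2 + q.1 • d ∈ N} with hTdef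
  have hSmeas : MeasurableSet S := by
    have hf : Continuous fun p : EuclideanSpace ℝ (Fin n) × ℝ => p.1 + p.2 • d :=
      continuous_fst.add (continuous_snd.smul continuous_const)
    exact hf.measurable hNmeas
  have hTmeas : MeasurableSet T := by
    have hf : Continuous fun q : ℝ × EuclideanSpace ℝ (Fin n) => q.2 + q.1 • d :=
      continuous_snd.add (continuous_fst.smul continuous_const)
    exact hf.measurable hNmeas
  have hT0 : (volume : Measure ℝ).prod (volume : Measure (EuclideanSpace ℝ (Fin n))) T = 0 := by
    rw [Measure.prod_apply hTmeas]
    have hslice : ∀ t : ℝ,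
        volume (Prod.mk t ⁻¹' T) = 0 := by
      intro t
      have h1 : Prod.mk t ⁻¹' T = (fun x => x + t • d) ⁻¹' N := rfl
      rw [h1, measure_preimage_add_right]
      exact hN0
    simp [hslice]
  have hS0 : (volume : Measure (EuclideanSpace ℝ (Fin n))).prod (volume : Measure ℝ) S = 0 := by
    have h1 : ((volume : Measure ℝ).prod
        (volume : Measure (EuclideanSpace ℝ (Fin n)))).map Prod.swap S
        = (volume : Measure ℝ).prod (volume : Measure (EuclideanSpace ℝ (Fin n))) T := by
      rw [Measure.map_apply measurable_swap hSmeas]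
      rfl
    rw [← Measure.prod_swap, h1]
    exact hT0
  have hae : ∀ᵐ x ∂(volume : Measure (EuclideanSpace ℝ (Fin n))),
      volume (Prod.mk x ⁻¹' S) = 0 :=
    (Measure.measure_prod_null hSmeas).mp hS0
  -- thickening of the segment
  obtain ⟨ε, hε, hthick⟩ : ∃ ε > 0, Metric.thickening ε (segment ℝ a b) ⊆ Ω := by
    have hcs : IsCompact (segment ℝ a b) := by
      rw [segment_eq_image']
      exact isCompact_Icc.image (by fun_prop)
    rcases hcs.exists_thickening_subset_open hopen
      (hconv.segment_subset ha hb) with ⟨ε, hε, h⟩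
    exact ⟨ε, hε, h⟩
  -- choose nearby good points
  have hG : ∀ k : ℕ, ∃ x : EuclideanSpace ℝ (Fin n),
      dist x a < min ε (1 / (k + 1)) ∧ volume {t : ℝ | x + t • d ∈ N} = 0 := by
    intro k
    have hr : (0 : ℝ) < min ε (1 / (k + 1)) := lt_min hε (by positivity)
    by_contra h
    push_neg at h
    have hsub' : Metric.ball a (min ε (1 / (k + 1))) ⊆
        {x | ¬ volume (Prod.mk x ⁻¹' S) = 0} := by
      intro x hx
      have := h x (Metric.mem_ball.mp hx)
      exact fun hc => (this hc).elim
    have h0 := measure_mono_null hsub' (ae_iff.mp hae)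
    exact absurd h0 (Metric.measure_ball_pos volume a hr).ne'
  choose xs hxs1 hxs2 using hG
  have hmem : ∀ k, ∀ t ∈ Icc (0 : ℝ) 1, xs k + t • d ∈ Ω := by
    intro k t ht
    apply hthick
    rw [Metric.mem_thickening_iff]
    refine ⟨a + t • d, ?_, ?_⟩
    · rw [segment_eq_image']
      exact ⟨t, ht, rfl⟩
    · have h1 : dist (xs k + t • d) (a + t • d) = dist (xs k) a := dist_add_right _ _ _
      rw [h1]
      exact lt_of_lt_of_le (hxs1 k) (min_le_left _ _)
  refine ⟨xs, fun k => xs k + d, ?_, ?_, ?_, ?_, ?_⟩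
  · exact fun k => by simpa using hmem k 0 (by norm_num)
  · exact fun k => by simpa using hmem k 1 (by norm_num)
  · rw [tendsto_iff_dist_tendsto_zero]
    apply squeeze_zero (fun k => dist_nonneg)
      (fun k => (hxs1 k).le.trans (min_le_right _ _))
    exact tendsto_one_div_add_atTop_nhds_zero_nat
  · have h1 : Tendsto (fun k => xs k + d) atTop (𝓝 (a + d)) := by
      have ha' : Tendsto xs atTop (𝓝 a) := by
        rw [tendsto_iff_dist_tendsto_zero]
        apply squeeze_zero (fun k => dist_nonneg)
          (fun k => (hxs1 k).le.trans (min_le_right _ _))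
        exact tendsto_one_div_add_atTop_nhds_zero_nat
      exact ha'.add tendsto_const_nhds
    have : a + d = b := by rw [hd]; abel
    rwa [this] at h1
  · intro k
    have hd' : (xs k + d) - xs k = d := add_sub_cancel_left _ _
    simp only [hd']
    set G : Set ℝ := {t : ℝ | t ∈ Icc (0 : ℝ) 1 ∧ xs k + t • d ∈ Ω₀} with hGdef
    have hsubG : G ⊆ Icc 0 1 := fun t ht => ht.1
    have hbad : Icc (0 : ℝ) 1 \ G ⊆ {t | xs k + t • d ∈ N} := by
      intro t ht
      have hΩ := hmem k t ht.1
      exact ⟨hΩ, fun h => ht.2 ⟨ht.1, h⟩⟩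
    have h1 : volume (Icc (0 : ℝ) 1 \ G) = 0 := measure_mono_null hbad (hxs2 k)
    have h2 : volume (Icc (0 : ℝ) 1) = volume G := by
      apply le_antisymm
      · calc volume (Icc (0 : ℝ) 1) ≤ volume (G ∪ (Icc (0 : ℝ) 1 \ G)) := by
              apply measure_mono
              intro t ht
              by_cases h : t ∈ G
              exacts [Or.inl h, Or.inr ⟨ht, h⟩]
          _ ≤ volume G + volume (Icc (0 : ℝ) 1 \ G) := measure_union_le _ _
          _ = volume G := by rw [h1, add_zero]
      · exact measure_mono hsubG
    rw [← h2, Real.volume_Icc]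
    norm_num

end
end

section
/- Let Ω ⊆ ℝⁿ be a nonempty open convex set and φ : ℝⁿ → ℝ a function that is (Fréchet) differentiable at every point of Ω with gradient ∇φ Lipschitz continuous on Ω. Then φ is convex on Ω if and only if for every x ∈ Ω at which ∇φ is differentiable (i.e., φ is twice differentiable at x), the second derivative ∇²φ(x) is positive semidefinite, i.e., ⟨w, ∇²φ(x)w⟩ ≥ 0 for all w ∈ ℝⁿ. -/
open scoped RealInnerProductSpace
open Filter Topology MeasureTheory Set

noncomputable section

variable {n : ℕ}

open Metric

set_option maxHeartbeats 1000000


lemma aux_line_hasDerivAt (x e z : EuclideanSpace ℝ (Fin n)) (t : ℝ) :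
    HasDerivAt (fun t : ℝ => x + t • e + z) e t := by
  simpa using (((hasDerivAt_id t).smul_const e).const_add x).add_const z

lemma aux_inner_line_hasDerivAt {g : EuclideanSpace ℝ (Fin n) → EuclideanSpace ℝ (Fin n)}
    {x e z : EuclideanSpace ℝ (Fin n)} {t : ℝ}
    {H : EuclideanSpace ℝ (Fin n) →L[ℝ] EuclideanSpace ℝ (Fin n)}
    (hg : HasFDerivAt g H (x + t • e + z)) :
    HasDerivAt (fun s : ℝ => ⟪e, g (x + s • e + z)⟫) ⟪e, H e⟫ t := by
  have h1 : HasDerivAt (fun s : ℝ => g (x + s • e + z)) (H e) t :=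
    hg.comp_hasDerivAt t (aux_line_hasDerivAt x e z t)
  have h2 := (innerSL ℝ e).hasFDerivAt.comp_hasDerivAt t h1
  simpa [Function.comp_def] using h2

lemma aux_mono_of_psd {Ω : Set (EuclideanSpace ℝ (Fin n))} (hopen : IsOpen Ω)
    (hΩconv : Convex ℝ Ω)
    {g : EuclideanSpace ℝ (Fin n) → EuclideanSpace ℝ (Fin n)} {K : NNReal}
    (hlip : LipschitzOnWith K g Ω)
    (hpsd : ∀ x ∈ Ω, DifferentiableAt ℝ g x →
      ∀ w : EuclideanSpace ℝ (Fin n), 0 ≤ ⟪w, fderiv ℝ g x w⟫)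
    {x y : EuclideanSpace ℝ (Fin n)} (hx : x ∈ Ω) (hy : y ∈ Ω) :
    0 ≤ ⟪g y - g x, y - x⟫ := by
  set e := y - x with he
  -- Rademacher
  have hrad : ∀ᵐ p : EuclideanSpace ℝ (Fin n) ∂volume, p ∈ Ω → DifferentiableAt ℝ g p := by
    filter_upwards [hlip.ae_differentiableWithinAt_of_mem] with p hp hpΩ
    exact (hp hpΩ).differentiableAt (hopen.mem_nhds hpΩ)
  -- thickening of the segment
  have hsegcomp : IsCompact ((fun t : ℝ => x + t • e) '' Icc 0 1) :=
    isCompact_Icc.image (by continuity)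
  have hsegsub : (fun t : ℝ => x + t • e) '' Icc 0 1 ⊆ Ω := by
    rintro _ ⟨t, ht, rfl⟩; exact hΩconv.add_smul_sub_mem hx hy ht
  obtain ⟨r₀, hr₀, hthick⟩ := hsegcomp.exists_cthickening_subset_open hopen hsegsub
  set δ := r₀ / (2 * (‖e‖ + 1)) with hδdef
  have hδ : 0 < δ := by positivity
  have hmemJ : ∀ t ∈ Icc (-δ) (1 + δ), ∀ z : EuclideanSpace ℝ (Fin n),
      ‖z‖ ≤ r₀ / 2 → x + t • e + z ∈ Ω := by
    intro t ht z hz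
    obtain ⟨t', ht', htt'⟩ : ∃ t' ∈ Icc (0 : ℝ) 1, |t - t'| ≤ δ := by
      rcases le_total t 0 with h | h
      · exact ⟨0, left_mem_Icc.mpr zero_le_one,
          by rw [sub_zero, abs_of_nonpos h]; linarith [ht.1]⟩
      · rcases le_total t 1 with h1 | h1
        · exact ⟨t, ⟨h, h1⟩, by simp [hδ.le]⟩
        · exact ⟨1, right_mem_Icc.mpr zero_le_one,
            by rw [abs_of_nonneg (by linarith)]; linarith [ht.2]⟩
    apply hthick
    apply mem_cthickening_of_dist_le (x + t • e + z) (x + t' • e) r₀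
      ((fun t : ℝ => x + t • e) '' Icc 0 1) ⟨t', ht', rfl⟩
    have hdist : dist (x + t • e + z) (x + t' • e) ≤ |t - t'| * ‖e‖ + ‖z‖ := by
      rw [dist_eq_norm]
      have h2 : x + t • e + z - (x + t' • e) = (t - t') • e + z := by module
      rw [h2]
      calc ‖(t - t') • e + z‖ ≤ ‖(t - t') • e‖ + ‖z‖ := norm_add_le _ _
        _ = |t - t'| * ‖e‖ + ‖z‖ := by rw [norm_smul, Real.norm_eq_abs]
    have hδe : δ * ‖e‖ ≤ r₀ / 2 := by
      rw [hδdef, div_mul_eq_mul_div, div_le_div_iff₀ (by positivity) (by norm_num)]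
      nlinarith [norm_nonneg e, hr₀]
    calc dist (x + t • e + z) (x + t' • e) ≤ |t - t'| * ‖e‖ + ‖z‖ := hdist
      _ ≤ δ * ‖e‖ + r₀ / 2 := by gcongr
      _ ≤ r₀ / 2 + r₀ / 2 := by linarith
      _ = r₀ := by ring
  -- main quantitative estimate for each small radius r
  have key : ∀ r : ℝ, 0 < r → r ≤ r₀ / 2 → -((K : ℝ) * ‖e‖ * r * 2) ≤ ⟪e, g y - g x⟫ := by
    intro r hr hrr
    set B := Metric.closedBall (0 : EuclideanSpace ℝ (Fin n)) r with hB
    have hBmeas : MeasurableSet B := measurableSet_closedBall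
    haveI : IsFiniteMeasure (volume.restrict B) :=
      ⟨by rw [Measure.restrict_apply_univ]; exact measure_closedBall_lt_top⟩
    have hzB : ∀ z ∈ B, ‖z‖ ≤ r₀ / 2 := by
      intro z hz
      rw [hB, Metric.mem_closedBall, dist_zero_right] at hz
      linarith
    have hJmem : ∀ t ∈ Icc (-δ) (1 + δ), ∀ z ∈ B, x + t • e + z ∈ Ω := fun t ht z hz =>
      hmemJ t ht z (hzB z hz)
    have hgcont : ContinuousOn g Ω := hlip.continuousOn
    have hcontOn : ∀ t ∈ Icc (-δ) (1 + δ),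
        ContinuousOn (fun z => ⟪e, g (x + t • e + z)⟫) B := by
      intro t ht
      apply (innerSL ℝ e).continuous.comp_continuousOn
      exact hgcont.comp (continuous_add_left (x + t • e)).continuousOn
        (fun z hz => hJmem t ht z hz)
    have hmeas : ∀ t ∈ Icc (-δ) (1 + δ),
        AEStronglyMeasurable (fun z => ⟪e, g (x + t • e + z)⟫) (volume.restrict B) :=
      fun t ht => (hcontOn t ht).aestronglyMeasurable hBmeas
    have hInt : ∀ t ∈ Icc (-δ) (1 + δ),
        Integrable (fun z => ⟪e, g (x + t • e + z)⟫) (volume.restrict B) :=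
      fun t ht => (hcontOn t ht).integrableOn_compact (isCompact_closedBall 0 r)
    set F : ℝ → ℝ := fun t => ∫ z in B, ⟪e, g (x + t • e + z)⟫ with hF
    have hIcc_sub : ∀ t₀ ∈ Icc (0 : ℝ) 1, ∀ t ∈ ball t₀ δ, t ∈ Icc (-δ) (1 + δ) := by
      intro t₀ ht₀ t ht
      rw [mem_ball, Real.dist_eq, abs_sub_lt_iff] at ht
      exact ⟨by linarith [ht₀.1, ht.2], by linarith [ht₀.2, ht.1]⟩
    have hFd : ∀ t₀ ∈ Icc (0 : ℝ) 1, ∃ c : ℝ, 0 ≤ c ∧ HasDerivAt F c t₀ := by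
      intro t₀ ht₀
      have ht₀J : t₀ ∈ Icc (-δ) (1 + δ) := ⟨by linarith [ht₀.1, hδ], by linarith [ht₀.2, hδ]⟩
      -- a.e. differentiability at the translated points
      have hae : ∀ᵐ z : EuclideanSpace ℝ (Fin n) ∂volume,
          x + t₀ • e + z ∈ Ω → DifferentiableAt ℝ g (x + t₀ • e + z) := by
        rw [ae_iff]
        have hset : {z : EuclideanSpace ℝ (Fin n) |
            ¬(x + t₀ • e + z ∈ Ω → DifferentiableAt ℝ g (x + t₀ • e + z))} =
            (fun z => (x + t₀ • e) + z) ⁻¹'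
              {p | ¬(p ∈ Ω → DifferentiableAt ℝ g p)} := rfl
        rw [hset, measure_preimage_add]
        exact ae_iff.mp hrad
      set D : EuclideanSpace ℝ (Fin n) → ℝ :=
        fun z => ⟪e, fderiv ℝ g (x + t₀ • e + z) e⟫ with hD
      have hDmeas : AEStronglyMeasurable D (volume.restrict B) := by
        apply Measurable.aestronglyMeasurable
        exact measurable_const.inner
          ((measurable_fderiv_apply_const ℝ g e).comp (measurable_id.const_add (x + t₀ • e)))
      have hlipb : ∀ᵐ z ∂(volume.restrict B),
          LipschitzOnWith (Real.nnabs ((K : ℝ) * ‖e‖ ^ 2))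
            (fun t => ⟪e, g (x + t • e + z)⟫) (ball t₀ δ) := by
        rw [ae_restrict_iff' hBmeas]
        apply ae_of_all
        intro z hz
        rw [lipschitzOnWith_iff_dist_le_mul]
        intro t ht t' ht'
        have h1 : x + t • e + z ∈ Ω := hJmem t (hIcc_sub t₀ ht₀ t ht) z hz
        have h2 : x + t' • e + z ∈ Ω := hJmem t' (hIcc_sub t₀ ht₀ t' ht') z hz
        have hgl : dist (g (x + t • e + z)) (g (x + t' • e + z)) ≤
            (K : ℝ) * dist (x + t • e + z) (x + t' • e + z) := hlip.dist_le_mul _ h1 _ h2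
        have hd2 : dist (x + t • e + z) (x + t' • e + z) = dist t t' * ‖e‖ := by
          rw [dist_eq_norm, Real.dist_eq]
          have h3 : x + t • e + z - (x + t' • e + z) = (t - t') • e := by module
          rw [h3, norm_smul, Real.norm_eq_abs]
        rw [Real.dist_eq]
        have h4 : |⟪e, g (x + t • e + z)⟫ - ⟪e, g (x + t' • e + z)⟫| ≤
            ‖e‖ * ‖g (x + t • e + z) - g (x + t' • e + z)‖ := by
          rw [← inner_sub_right]
          exact abs_real_inner_le_norm _ _
        have h5 : ‖g (x + t • e + z) - g (x + t' • e + z)‖ ≤ (K : ℝ) * (dist t t' * ‖e‖) := by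
          rw [← dist_eq_norm, ← hd2]; exact hgl
        have hcoe : ((Real.nnabs ((K : ℝ) * ‖e‖ ^ 2)) : ℝ) = (K : ℝ) * ‖e‖ ^ 2 := by
          rw [Real.coe_nnabs, abs_of_nonneg (by positivity)]
        rw [hcoe]
        calc |⟪e, g (x + t • e + z)⟫ - ⟪e, g (x + t' • e + z)⟫|
            ≤ ‖e‖ * ((K : ℝ) * (dist t t' * ‖e‖)) :=
              h4.trans (by gcongr)
          _ = (K : ℝ) * ‖e‖ ^ 2 * dist t t' := by ring
      have hdiffae : ∀ᵐ z ∂(volume.restrict B),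
          HasDerivAt (fun t => ⟪e, g (x + t • e + z)⟫) (D z) t₀ := by
        rw [ae_restrict_iff' hBmeas]
        filter_upwards [hae] with z hz hzB'
        have hp : x + t₀ • e + z ∈ Ω := hJmem t₀ ht₀J z hzB'
        exact aux_inner_line_hasDerivAt ((hz hp).hasFDerivAt)
      have hFmeasev : ∀ᶠ t in 𝓝 t₀,
          AEStronglyMeasurable (fun z => ⟪e, g (x + t • e + z)⟫) (volume.restrict B) := by
        filter_upwards [Metric.ball_mem_nhds t₀ hδ] with t ht
        exact hmeas t (hIcc_sub t₀ ht₀ t ht)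
      have hres := hasDerivAt_integral_of_dominated_loc_of_lip
        (F := fun t z => ⟪e, g (x + t • e + z)⟫) (μ := volume.restrict B)
        (bound := fun _ => (K : ℝ) * ‖e‖ ^ 2) (Metric.ball_mem_nhds t₀ hδ) hFmeasev (hInt t₀ ht₀J) hDmeas hlipb
        (integrable_const _) hdiffae
      refine ⟨∫ z in B, D z, ?_, hres.2⟩
      have h10 : ∀ᵐ z ∂(volume.restrict B), 0 ≤ D z := by
        rw [ae_restrict_iff' hBmeas]
        filter_upwards [hae] with z hz hzB'
        have hp : x + t₀ • e + z ∈ Ω := hJmem t₀ ht₀J z hzB'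
        exact hpsd _ hp (hz hp) e
      exact integral_nonneg_of_ae h10
    -- F is monotone on [0,1]
    have hFcont : ContinuousOn F (Icc 0 1) := fun t ht =>
      ((hFd t ht).choose_spec.2.continuousAt).continuousWithinAt
    have hFdiff : DifferentiableOn ℝ F (interior (Icc (0 : ℝ) 1)) := by
      rw [interior_Icc]
      exact fun t ht =>
        ((hFd t (Ioo_subset_Icc_self ht)).choose_spec.2.differentiableAt).differentiableWithinAt
    have hFmono : MonotoneOn F (Icc (0 : ℝ) 1) := by
      apply monotoneOn_of_deriv_nonneg (convex_Icc 0 1) hFcont hFdiff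
      intro t ht
      rw [interior_Icc] at ht
      obtain ⟨c, hc, hder⟩ := hFd t (Ioo_subset_Icc_self ht)
      rw [hder.deriv]; exact hc
    have hF01 : F 0 ≤ F 1 :=
      hFmono (left_mem_Icc.mpr zero_le_one) (right_mem_Icc.mpr zero_le_one) zero_le_one
    -- rewrite F 0 and F 1
    have hre1 : ∀ z : EuclideanSpace ℝ (Fin n), x + (1 : ℝ) • e + z = y + z := by
      intro z; rw [he]; module
    have hre0 : ∀ z : EuclideanSpace ℝ (Fin n), x + (0 : ℝ) • e + z = x + z := by
      intro z; module
    have h0J : (0 : ℝ) ∈ Icc (-δ) (1 + δ) := ⟨by linarith, by linarith⟩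
    have h1J : (1 : ℝ) ∈ Icc (-δ) (1 + δ) := ⟨by linarith, by linarith⟩
    have hint1 : Integrable (fun z => ⟪e, g (y + z)⟫) (volume.restrict B) := by
      have := hInt 1 h1J; simpa only [hre1] using this
    have hint0 : Integrable (fun z => ⟪e, g (x + z)⟫) (volume.restrict B) := by
      have := hInt 0 h0J; simpa only [hre0] using this
    have hdiffInt : (0 : ℝ) ≤ ∫ z in B, (⟪e, g (y + z)⟫ - ⟪e, g (x + z)⟫) := by
      rw [integral_sub hint1 hint0]
      have hF1 : F 1 = ∫ z in B, ⟪e, g (y + z)⟫ := by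
        rw [hF]; simp only [hre1]
      have hF0 : F 0 = ∫ z in B, ⟪e, g (x + z)⟫ := by
        rw [hF]; simp only [hre0]
      rw [← hF1, ← hF0]; linarith
    -- pointwise bound
    set C : ℝ := ⟪e, g y - g x⟫ + (K : ℝ) * ‖e‖ * r * 2 with hC
    have hbound : ∀ z ∈ B, ⟪e, g (y + z)⟫ - ⟪e, g (x + z)⟫ ≤ C := by
      intro z hz
      have hyz : y + z ∈ Ω := by
        have := hJmem 1 h1J z hz; rwa [hre1] at this
      have hxz : x + z ∈ Ω := by
        have := hJmem 0 h0J z hz; rwa [hre0] at this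
      have hznorm : ‖z‖ ≤ r := by
        rw [hB, Metric.mem_closedBall, dist_zero_right] at hz; exact hz
      have hsplit : g (y + z) - g (x + z) =
          (g y - g x) + (g (y + z) - g y) + (g x - g (x + z)) := by abel
      have hterm1 : ⟪e, g (y + z) - g y⟫ ≤ (K : ℝ) * ‖e‖ * r := by
        have h6 : ‖g (y + z) - g y‖ ≤ (K : ℝ) * ‖z‖ := by
          have := hlip.dist_le_mul _ hyz _ hy
          rwa [dist_eq_norm, dist_eq_norm, add_sub_cancel_left] at this
        calc ⟪e, g (y + z) - g y⟫ ≤ ‖e‖ * ‖g (y + z) - g y‖ := real_inner_le_norm _ _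
          _ ≤ ‖e‖ * ((K : ℝ) * ‖z‖) := by gcongr
          _ ≤ (K : ℝ) * ‖e‖ * r := by
              nlinarith [hznorm, mul_nonneg (NNReal.coe_nonneg K) (norm_nonneg e)]
      have hterm2 : ⟪e, g x - g (x + z)⟫ ≤ (K : ℝ) * ‖e‖ * r := by
        have h6 : ‖g x - g (x + z)‖ ≤ (K : ℝ) * ‖z‖ := by
          have := hlip.dist_le_mul _ hx _ hxz
          rwa [dist_eq_norm, dist_eq_norm, show x - (x + z) = -z by abel, norm_neg] at this
        calc ⟪e, g x - g (x + z)⟫ ≤ ‖e‖ * ‖g x - g (x + z)‖ := real_inner_le_norm _ _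
          _ ≤ ‖e‖ * ((K : ℝ) * ‖z‖) := by gcongr
          _ ≤ (K : ℝ) * ‖e‖ * r := by
              nlinarith [hznorm, mul_nonneg (NNReal.coe_nonneg K) (norm_nonneg e)]
      have heq : ⟪e, g (y + z)⟫ - ⟪e, g (x + z)⟫ =
          ⟪e, g y - g x⟫ + ⟪e, g (y + z) - g y⟫ + ⟪e, g x - g (x + z)⟫ := by
        rw [← inner_sub_right, hsplit, inner_add_right, inner_add_right]
      rw [heq, hC]; linarith
    have hvol : (0 : ℝ) < (volume B).toReal := by
      refine ENNReal.toReal_pos ?_ measure_closedBall_lt_top.ne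
      exact (measure_closedBall_pos volume _ hr).ne'
    have hIle : (∫ z in B, (⟪e, g (y + z)⟫ - ⟪e, g (x + z)⟫)) ≤ (volume B).toReal * C := by
      have := setIntegral_mono_on (hint1.sub hint0)
        (integrableOn_const measure_closedBall_lt_top.ne) hBmeas hbound
      calc (∫ z in B, (⟪e, g (y + z)⟫ - ⟪e, g (x + z)⟫)) ≤ ∫ _ in B, C := this
        _ = (volume B).toReal * C := by rw [setIntegral_const, smul_eq_mul]; rfl
    have hCpos : 0 ≤ C := by
      have h7 : (0 : ℝ) ≤ (volume B).toReal * C := le_trans hdiffInt hIle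
      nlinarith
    rw [hC] at hCpos; linarith
  -- let r → 0
  have hfin : 0 ≤ ⟪e, g y - g x⟫ := by
    apply le_of_forall_pos_le_add
    intro ε hε
    set r : ℝ := min (r₀ / 2) (ε / ((K : ℝ) * ‖e‖ * 2 + 1)) with hrdef
    have hrpos : 0 < r := lt_min (by positivity) (by positivity)
    have hkey := key r hrpos (min_le_left _ _)
    have hrle : r ≤ ε / ((K : ℝ) * ‖e‖ * 2 + 1) := min_le_right _ _
    have hmul : (K : ℝ) * ‖e‖ * r * 2 ≤ ε := by
      have hden : (0 : ℝ) < (K : ℝ) * ‖e‖ * 2 + 1 := by positivity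
      have h8 : (K : ℝ) * ‖e‖ * 2 * r ≤ (K : ℝ) * ‖e‖ * 2 * (ε / ((K : ℝ) * ‖e‖ * 2 + 1)) := by
        gcongr
      have h9 : (K : ℝ) * ‖e‖ * 2 * (ε / ((K : ℝ) * ‖e‖ * 2 + 1)) ≤ ε := by
        rw [← mul_div_assoc, div_le_iff₀ hden]
        nlinarith [NNReal.coe_nonneg K, norm_nonneg e, hε.le]
      linarith
    linarith
  rwa [real_inner_comm] at hfin



lemma aux_grad_line_hasDerivAt {φ : EuclideanSpace ℝ (Fin n) → ℝ}
    {v : EuclideanSpace ℝ (Fin n)} {x e : EuclideanSpace ℝ (Fin n)} {t : ℝ}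
    (hφ : HasGradientAt φ v (x + t • e)) :
    HasDerivAt (fun s : ℝ => φ (x + s • e)) ⟪v, e⟫ t := by
  have h1 : HasDerivAt (fun s : ℝ => x + s • e) e t := by
    simpa using ((hasDerivAt_id t).smul_const e).const_add x
  have h2 := hφ.hasFDerivAt.comp_hasDerivAt t h1
  simpa [InnerProductSpace.toDual_apply_apply, Function.comp_def] using h2

/-- first-order condition for a convex function with a gradient. -/
lemma aux_first_order {Ω : Set (EuclideanSpace ℝ (Fin n))} (hΩconv : Convex ℝ Ω)
    {φ : EuclideanSpace ℝ (Fin n) → ℝ} {g : EuclideanSpace ℝ (Fin n) → EuclideanSpace ℝ (Fin n)}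
    (hgrad : ∀ x ∈ Ω, HasGradientAt φ (g x) x) (hconv : ConvexOn ℝ Ω φ)
    {x y : EuclideanSpace ℝ (Fin n)} (hx : x ∈ Ω) (hy : y ∈ Ω) :
    ⟪g x, y - x⟫ ≤ φ y - φ x := by
  set e := y - x with he
  set h : ℝ → ℝ := fun t => φ (x + t • e) with hh
  have hmem : ∀ t ∈ Icc (0 : ℝ) 1, x + t • e ∈ Ω := fun t ht =>
    hΩconv.add_smul_sub_mem hx hy ht
  have hcv : ConvexOn ℝ (Icc (0 : ℝ) 1) h := by
    refine ⟨convex_Icc 0 1, fun s hs t ht a b ha hb hab => ?_⟩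
    have ha' : a = 1 - b := by linarith
    subst ha'
    have key : x + ((1 - b) • s + b • t) • e = (1 - b) • (x + s • e) + b • (x + t • e) := by
      simp only [smul_eq_mul]; module
    rw [hh]
    simp only [smul_eq_mul] at key ⊢
    simp only [key]
    exact hconv.2 (hmem s hs) (hmem t ht) ha hb hab
  have hd : HasDerivAt h ⟪g x, e⟫ 0 := by
    have := aux_grad_line_hasDerivAt (φ := φ) (v := g x) (x := x) (e := e) (t := 0)
    apply this
    rw [zero_smul, add_zero]
    exact hgrad x hx
  have h0 : (0 : ℝ) ∈ Icc (0 : ℝ) 1 := by constructor <;> norm_num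
  have h1 : (1 : ℝ) ∈ Icc (0 : ℝ) 1 := by constructor <;> norm_num
  have := hcv.le_slope_of_hasDerivAt h0 h1 one_pos hd
  rw [slope_def_field] at this
  have h1e : h 1 = φ y := by simp [hh, he]
  have h0e : h 0 = φ x := by simp [hh]
  calc ⟪g x, y - x⟫ ≤ (h 1 - h 0) / (1 - 0) := this
    _ = φ y - φ x := by rw [h1e, h0e]; ring

/-- monotone gradient implies convexity. -/
lemma aux_convexOn_of_mono {Ω : Set (EuclideanSpace ℝ (Fin n))} (hΩconv : Convex ℝ Ω)
    {φ : EuclideanSpace ℝ (Fin n) → ℝ} {g : EuclideanSpace ℝ (Fin n) → EuclideanSpace ℝ (Fin n)}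
    (hgrad : ∀ x ∈ Ω, HasGradientAt φ (g x) x)
    (hmono : ∀ x ∈ Ω, ∀ y ∈ Ω, 0 ≤ ⟪g y - g x, y - x⟫) : ConvexOn ℝ Ω φ := by
  refine ⟨hΩconv, fun x hx y hy a b ha hb hab => ?_⟩
  set e := y - x with he
  set h : ℝ → ℝ := fun t => φ (x + t • e) with hh
  have hmem : ∀ t ∈ Icc (0 : ℝ) 1, x + t • e ∈ Ω := fun t ht =>
    hΩconv.add_smul_sub_mem hx hy ht
  have hder : ∀ t ∈ Icc (0 : ℝ) 1, HasDerivAt h ⟪g (x + t • e), e⟫ t := fun t ht =>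
    aux_grad_line_hasDerivAt (hgrad _ (hmem t ht))
  have hcont : ContinuousOn h (Icc (0 : ℝ) 1) := fun t ht =>
    ((hder t ht).continuousAt).continuousWithinAt
  have hdiff : DifferentiableOn ℝ h (interior (Icc (0 : ℝ) 1)) := by
    rw [interior_Icc]
    exact fun t ht => ((hder t (Ioo_subset_Icc_self ht)).differentiableAt).differentiableWithinAt
  have hmonoOn : MonotoneOn (deriv h) (interior (Icc (0 : ℝ) 1)) := by
    rw [interior_Icc]
    intro s hs t ht hst
    rw [(hder s (Ioo_subset_Icc_self hs)).deriv, (hder t (Ioo_subset_Icc_self ht)).deriv]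
    have := hmono _ (hmem s (Ioo_subset_Icc_self hs)) _ (hmem t (Ioo_subset_Icc_self ht))
    have hdiffpt : (x + t • e) - (x + s • e) = (t - s) • e := by
      rw [sub_smul]; abel
    rw [hdiffpt, real_inner_smul_right] at this
    have hsub : ⟪g (x + t • e) - g (x + s • e), e⟫
        = ⟪g (x + t • e), e⟫ - ⟪g (x + s • e), e⟫ := inner_sub_left _ _ _
    rcases eq_or_lt_of_le hst with rfl | hlt
    · exact le_refl _
    · nlinarith [this, hsub]
  have hcv : ConvexOn ℝ (Icc (0 : ℝ) 1) h :=
    MonotoneOn.convexOn_of_deriv (convex_Icc 0 1) hcont hdiff hmonoOn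
  have h0 : (0 : ℝ) ∈ Icc (0 : ℝ) 1 := by constructor <;> norm_num
  have h1 : (1 : ℝ) ∈ Icc (0 : ℝ) 1 := by constructor <;> norm_num
  have key := hcv.2 h0 h1 ha hb hab
  have hab' : h (a • (0:ℝ) + b • (1:ℝ)) = φ (a • x + b • y) := by
    have hxy : x + (a • (0:ℝ) + b • (1:ℝ)) • e = a • x + b • y := by
      rw [he]
      have ha' : a = 1 - b := by linarith
      subst ha'
      simp only [smul_zero, smul_eq_mul, mul_one, zero_add]
      module
    rw [hh]; simp only [hxy]
  rw [hab'] at key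
  have h0e : h 0 = φ x := by simp [hh]
  have h1e : h 1 = φ y := by simp [hh, he]
  rw [h0e, h1e] at key
  simpa using key


lemma aux_mono_of_convex {Ω : Set (EuclideanSpace ℝ (Fin n))} (hΩconv : Convex ℝ Ω)
    {φ : EuclideanSpace ℝ (Fin n) → ℝ} {g : EuclideanSpace ℝ (Fin n) → EuclideanSpace ℝ (Fin n)}
    (hgrad : ∀ x ∈ Ω, HasGradientAt φ (g x) x) (hconv : ConvexOn ℝ Ω φ)
    (hfo : ∀ x ∈ Ω, ∀ y ∈ Ω, ⟪g x, y - x⟫ ≤ φ y - φ x)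
    {p q : EuclideanSpace ℝ (Fin n)} (hp : p ∈ Ω) (hq : q ∈ Ω) :
    0 ≤ ⟪g q - g p, q - p⟫ := by
  have h1 := hfo p hp q hq
  have h2 := hfo q hq p hp
  have h3 : ⟪g q, p - q⟫ = -⟪g q, q - p⟫ := by
    rw [show p - q = -(q - p) by abel, inner_neg_right]
  rw [h3] at h2
  rw [inner_sub_left]
  linarith

lemma aux_psd_of_convex {Ω : Set (EuclideanSpace ℝ (Fin n))} (hopen : IsOpen Ω)
    {g : EuclideanSpace ℝ (Fin n) → EuclideanSpace ℝ (Fin n)}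
    (hmono : ∀ x ∈ Ω, ∀ y ∈ Ω, 0 ≤ ⟪g y - g x, y - x⟫)
    {x : EuclideanSpace ℝ (Fin n)} (hx : x ∈ Ω)
    {H : EuclideanSpace ℝ (Fin n) →L[ℝ] EuclideanSpace ℝ (Fin n)}
    (hH : HasFDerivAt g H x) (w : EuclideanSpace ℝ (Fin n)) : 0 ≤ ⟪w, H w⟫ := by
  set θ : ℝ → ℝ := fun t => ⟪w, g (x + t • w)⟫ with hθ
  have h1 : HasDerivAt (fun s : ℝ => x + s • w) w 0 := by
    simpa using ((hasDerivAt_id (0:ℝ)).smul_const w).const_add x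
  have hH' : HasFDerivAt g H (x + (0:ℝ) • w) := by simpa using hH
  have h2 : HasDerivAt (fun s : ℝ => g (x + s • w)) (H w) 0 := hH'.comp_hasDerivAt 0 h1
  have hθd : HasDerivAt θ ⟪w, H w⟫ 0 := by
    have h3 := (innerSL ℝ w).hasFDerivAt.comp_hasDerivAt 0 h2
    simpa [Function.comp_def] using h3
  have htend : Tendsto (slope θ 0) (𝓝[Ioi (0:ℝ)] 0) (𝓝 ⟪w, H w⟫) :=
    (hasDerivWithinAt_iff_tendsto_slope' notMem_Ioi_self).mp
      (hθd.hasDerivWithinAt (s := Ioi (0:ℝ)))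
  obtain ⟨ε, hε, hball⟩ := Metric.isOpen_iff.mp hopen x hx
  have hev : ∀ᶠ t in 𝓝[Ioi (0:ℝ)] 0, 0 ≤ slope θ 0 t := by
    filter_upwards [Ioo_mem_nhdsGT_of_mem (Set.mem_Ico.mpr
      ⟨le_refl (0:ℝ), div_pos hε (by positivity : (0:ℝ) < ‖w‖ + 1)⟩)] with t ht
    obtain ⟨ht0, htε⟩ := ht
    have hmem : x + t • w ∈ Ω := by
      apply hball
      rw [Metric.mem_ball, dist_eq_norm]
      have : ‖x + t • w - x‖ = t * ‖w‖ := by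
        rw [add_sub_cancel_left, norm_smul, Real.norm_eq_abs, abs_of_pos ht0]
      rw [this]
      calc t * ‖w‖ ≤ t * (‖w‖ + 1) := by nlinarith [norm_nonneg w]
        _ < ε / (‖w‖ + 1) * (‖w‖ + 1) := by
            apply mul_lt_mul_of_pos_right htε (by positivity)
        _ = ε := by field_simp
    have hm := hmono x hx (x + t • w) hmem
    rw [add_sub_cancel_left, real_inner_smul_right] at hm
    have hinner : (0:ℝ) ≤ ⟪g (x + t • w) - g x, w⟫ := nonneg_of_mul_nonneg_right hm ht0
    rw [slope_def_field]
    have hnum : θ t - θ 0 = ⟪g (x + t • w) - g x, w⟫ := by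
      rw [hθ]
      simp only [zero_smul, add_zero]
      rw [inner_sub_left, real_inner_comm w, real_inner_comm w]
    rw [hnum, sub_zero]
    positivity
  exact ge_of_tendsto htend hev

/-- a differentiable function with Lipschitz gradient on an open
convex set is convex there iff its Hessian is positive semidefinite wherever the
gradient is differentiable. -/
theorem statement3 (n : ℕ) (Ω : Set (EuclideanSpace ℝ (Fin n)))
    (hne : Ω.Nonempty) (hopen : IsOpen Ω) (hΩconv : Convex ℝ Ω)
    (φ : EuclideanSpace ℝ (Fin n) → ℝ) (g : EuclideanSpace ℝ (Fin n) → EuclideanSpace ℝ (Fin n))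
    (hgrad : ∀ x ∈ Ω, HasGradientAt φ (g x) x)
    (K : NNReal) (hlip : LipschitzOnWith K g Ω) :
    ConvexOn ℝ Ω φ ↔
      ∀ x ∈ Ω, ∀ H : EuclideanSpace ℝ (Fin n) →L[ℝ] EuclideanSpace ℝ (Fin n),
        HasFDerivAt g H x → ∀ w : EuclideanSpace ℝ (Fin n), 0 ≤ ⟪w, H w⟫ := by
  constructor
  · intro hconv x hxΩ H hH w
    have hfo : ∀ p ∈ Ω, ∀ q ∈ Ω, ⟪g p, q - p⟫ ≤ φ q - φ p := fun p hp q hq =>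
      aux_first_order hΩconv hgrad hconv hp hq
    have hmono : ∀ p ∈ Ω, ∀ q ∈ Ω, 0 ≤ ⟪g q - g p, q - p⟫ := fun p hp q hq =>
      aux_mono_of_convex hΩconv hgrad hconv hfo hp hq
    exact aux_psd_of_convex hopen hmono hxΩ hH w
  · intro hpsd
    apply aux_convexOn_of_mono hΩconv hgrad
    intro p hp q hq
    apply aux_mono_of_psd hopen hΩconv hlip ?_ hp hq
    intro z hz hdz w
    exact hpsd z hz (fderiv ℝ g z) hdz.hasFDerivAt w

end
end

section
/- Let Ω ⊆ ℝⁿ be a nonempty open convex set and φ : ℝⁿ → ℝ a function that is (Fréchet) differentiable at every point of Ω with gradient ∇φ Lipschitz continuous on Ω. Let G := {(u, ∇φ(u)) : u ∈ Ω} ⊆ ℝⁿ × ℝⁿ. Then φ is convex on Ω if and only if for every x ∈ Ω and every (w,z) ∈ T_G(x, ∇φ(x)), one has ⟨z,w⟩ ≥ 0. -/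
open scoped RealInnerProductSpace
open Filter Topology MeasureTheory Set

noncomputable section

variable {n : ℕ}

private lemma aux_hasDerivAt_line {n : ℕ} {φ : EuclideanSpace ℝ (Fin n) → ℝ}
    {gr x w : EuclideanSpace ℝ (Fin n)} {t : ℝ}
    (h : HasGradientAt φ gr (x + t • w)) :
    HasDerivAt (fun s : ℝ => φ (x + s • w)) ⟪gr, w⟫ t := by
  have hc : HasDerivAt (fun s : ℝ => x + s • w) w t := by
    simpa using ((hasDerivAt_id t).smul_const w).const_add x
  have hf : HasFDerivAt φ (InnerProductSpace.toDual ℝ _ gr) (x + t • w) :=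
    hasGradientAt_iff_hasFDerivAt.mp h
  simpa [InnerProductSpace.toDual_apply_apply, Function.comp_def] using hf.comp_hasDerivAt t hc

private lemma aux_mono_of_dini {ψ : ℝ → ℝ} {a b : ℝ} (hab : a ≤ b)
    (hcont : ContinuousOn ψ (Icc a b))
    (h : ∀ t ∈ Ico a b, ∀ r > (0:ℝ), ∃ᶠ z in 𝓝[>] t, -r < slope ψ t z) :
    ψ a ≤ ψ b := by
  have key : ∀ ⦃x⦄, x ∈ Icc a b → -ψ x ≤ (fun _ : ℝ => -ψ a) x := by
    apply image_le_of_liminf_slope_right_le_deriv_boundary (f := fun t => -ψ t)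
      (B := fun _ => -ψ a) (B' := fun _ => 0) hcont.neg le_rfl continuousOn_const
      (fun x _ => hasDerivWithinAt_const x _ _)
    intro x hx r hr
    refine (h x hx r hr).mono fun z hz => ?_
    have hz' : slope (fun t => -ψ t) x z = -slope ψ x z := by
      rw [slope_def_field, slope_def_field]; ring
    rw [hz']; linarith
  have := key (right_mem_Icc.2 hab)
  simpa using this

set_option maxHeartbeats 2000000 in
/-- convexity on an open convex set characterized via tangent cones
to the graph of the gradient. -/
theorem statement4 (n : ℕ) (Ω : Set (EuclideanSpace ℝ (Fin n)))
    (hne : Ω.Nonempty) (hopen : IsOpen Ω) (hΩconv : Convex ℝ Ω)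
    (φ : EuclideanSpace ℝ (Fin n) → ℝ) (g : EuclideanSpace ℝ (Fin n) → EuclideanSpace ℝ (Fin n))
    (hgrad : ∀ x ∈ Ω, HasGradientAt φ (g x) x)
    (K : NNReal) (hlip : LipschitzOnWith K g Ω) :
    ConvexOn ℝ Ω φ ↔
      ∀ x ∈ Ω, ∀ w z : EuclideanSpace ℝ (Fin n),
        (w, z) ∈ contTangentCone {p : EuclideanSpace ℝ (Fin n) × EuclideanSpace ℝ (Fin n) | p.1 ∈ Ω ∧ p.2 = g p.1} (x, g x) →
        0 ≤ ⟪z, w⟫ := by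
  classical
  have hseg : ∀ x u : EuclideanSpace ℝ (Fin n), x ∈ Ω → u ∈ Ω →
      ∀ s : ℝ, s ∈ Icc (0:ℝ) 1 → x + s • (u - x) ∈ Ω := by
    intro x u hx hu s hs
    have h := hΩconv hx hu (by linarith [hs.2] : (0:ℝ) ≤ 1 - s) hs.1 (by ring)
    have he : (1 - s) • x + s • u = x + s • (u - x) := by
      rw [sub_smul, one_smul, smul_sub]; abel
    rwa [he] at h
  constructor
  · intro hconv x hx w z hwz
    obtain ⟨t, ws, htpos, ht0, hws, hmem⟩ := hwz
    have mono : ∀ u ∈ Ω, 0 ≤ ⟪g u - g x, u - x⟫ := by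
      intro u hu
      set θ : ℝ → ℝ := fun r => φ (x + r • (u - x)) with hθdef
      have hθd : ∀ s ∈ Icc (0:ℝ) 1, HasDerivAt θ ⟪g (x + s • (u - x)), u - x⟫ s :=
        fun s hs => aux_hasDerivAt_line (hgrad _ (hseg x u hx hu s hs))
      have hθconv : ConvexOn ℝ (Icc (0:ℝ) 1) θ := by
        have h1 := hconv.comp_affineMap (AffineMap.lineMap x u)
        have h2 : Icc (0:ℝ) 1 ⊆ (AffineMap.lineMap x u) ⁻¹' Ω := by
          intro s hs
          have he : (AffineMap.lineMap x u) s = x + s • (u - x) := by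
            rw [AffineMap.lineMap_apply_module, sub_smul, one_smul, smul_sub]; abel
          simp only [Set.mem_preimage, he]
          exact hseg x u hx hu s hs
        have h3 := h1.subset h2 (convex_Icc 0 1)
        have hfun : θ = φ ∘ (AffineMap.lineMap x u) := by
          funext r
          simp only [hθdef, Function.comp_apply, AffineMap.lineMap_apply_module]
          congr 1
          rw [sub_smul, one_smul, smul_sub]
          abel
        rw [hfun]
        exact h3
      have hd0 : HasDerivAt θ ⟪g x, u - x⟫ 0 := by
        have h := hθd 0 (left_mem_Icc.2 zero_le_one)
        rwa [show x + (0:ℝ) • (u - x) = x by simp] at h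
      have hd1 : HasDerivAt θ ⟪g u, u - x⟫ 1 := by
        have h := hθd 1 (right_mem_Icc.2 zero_le_one)
        rwa [show x + (1:ℝ) • (u - x) = u by simp] at h
      have h0 : ⟪g x, u - x⟫ ≤ slope θ 0 1 :=
        hθconv.le_slope_of_hasDerivAt (left_mem_Icc.2 zero_le_one)
          (right_mem_Icc.2 zero_le_one) one_pos hd0
      have h1 : slope θ 0 1 ≤ ⟪g u, u - x⟫ :=
        hθconv.slope_le_of_hasDerivAt (left_mem_Icc.2 zero_le_one)
          (right_mem_Icc.2 zero_le_one) one_pos hd1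
      have h2 := h0.trans h1
      rw [inner_sub_left]; linarith
    have hk : ∀ k, 0 ≤ ⟪(ws k).2, (ws k).1⟫ := by
      intro k
      obtain ⟨hk1, hk2⟩ := hmem k
      have hfst : ((x, g x) + t k • ws k).1 = x + t k • (ws k).1 := rfl
      have hsnd : ((x, g x) + t k • ws k).2 = g x + t k • (ws k).2 := rfl
      rw [hfst] at hk1 hk2
      rw [hsnd] at hk2
      have h := mono _ hk1
      rw [show x + t k • (ws k).1 - x = t k • (ws k).1 by abel, ← hk2,
        show g x + t k • (ws k).2 - g x = t k • (ws k).2 by abel,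
        real_inner_smul_left, real_inner_smul_right] at h
      nlinarith [htpos k, mul_pos (htpos k) (htpos k)]
    have hlim : Tendsto (fun k => ⟪(ws k).2, (ws k).1⟫) atTop (𝓝 ⟪z, w⟫) := by
      have h1 : Tendsto (fun k => (ws k).1) atTop (𝓝 w) :=
        (continuous_fst.tendsto (w, z)).comp hws
      have h2 : Tendsto (fun k => (ws k).2) atTop (𝓝 z) :=
        (continuous_snd.tendsto (w, z)).comp hws
      exact h2.inner h1
    exact ge_of_tendsto' hlim hk
  · intro hT
    have key : ∀ x u : EuclideanSpace ℝ (Fin n), x ∈ Ω → u ∈ Ω →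
        ∀ a b : ℝ, a ∈ Icc (0:ℝ) 1 → b ∈ Icc (0:ℝ) 1 → a ≤ b →
        ⟪g (x + a • (u - x)), u - x⟫ ≤ ⟪g (x + b • (u - x)), u - x⟫ := by
      intro x u hx hu a b hamem hbmem hab
      set w := u - x with hwdef
      set ψ : ℝ → ℝ := fun s => ⟪g (x + s • w), w⟫ with hψdef
      have hψcont : ContinuousOn ψ (Icc (0:ℝ) 1) := by
        have hline : Continuous fun s : ℝ => x + s • w := by continuity
        have hgc : ContinuousOn (fun s : ℝ => g (x + s • w)) (Icc (0:ℝ) 1) :=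
          hlip.continuousOn.comp hline.continuousOn (fun s hs => hseg x u hx hu s hs)
        exact hgc.inner continuousOn_const
      have hfreq : ∀ t ∈ Ico a b, ∀ r > (0:ℝ), ∃ᶠ v in 𝓝[>] t, -r < slope ψ t v := by
        intro t ht r hr
        have ht01 : t ∈ Ico (0:ℝ) 1 := ⟨hamem.1.trans ht.1, lt_of_lt_of_le ht.2 hbmem.2⟩
        by_contra hcon
        rw [Filter.not_frequently] at hcon
        have hcon' : ∀ᶠ v in 𝓝[>] t, slope ψ t v ≤ -r := hcon.mono fun v hv => by
          push_neg at hv; exact hv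
        obtain ⟨s, hs⟩ := (𝓝[>] t).exists_seq_tendsto
        have hsl : ∀ᶠ k in atTop, slope ψ t (s k) ≤ -r := hs.eventually hcon'
        have hst : Tendsto s atTop (𝓝 t) := hs.mono_right nhdsWithin_le_nhds
        have hsgt : ∀ᶠ k in atTop, t < s k := hs.eventually self_mem_nhdsWithin
        have hslt : ∀ᶠ k in atTop, s k < 1 := hst.eventually (eventually_lt_nhds ht01.2)
        obtain ⟨N, hN⟩ := Filter.eventually_atTop.1 ((hsl.and hsgt).and hslt)
        set y := x + t • w with hydef
        have hyΩ : y ∈ Ω := hseg x u hx hu t ⟨ht01.1, ht01.2.le⟩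
        set T : ℕ → ℝ := fun k => s (k + N) - t with hTdef
        have hTpos : ∀ k, 0 < T k := fun k => sub_pos.2 (hN (k + N) (Nat.le_add_left N k)).1.2
        have hTto : Tendsto T atTop (𝓝 0) := by
          have h1 : Tendsto (fun k => s (k + N)) atTop (𝓝 t) :=
            hst.comp (tendsto_add_atTop_nat N)
          simpa using h1.sub_const t
        have hyT : ∀ k, y + T k • w = x + s (k + N) • w := by
          intro k
          rw [hydef, hTdef]
          simp only [sub_smul]
          abel
        have hmemT : ∀ k, y + T k • w ∈ Ω := by
          intro k
          rw [hyT k]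
          refine hseg x u hx hu _ ⟨?_, ?_⟩
          · exact ht01.1.trans (hN (k + N) (Nat.le_add_left N k)).1.2.le
          · exact (hN (k + N) (Nat.le_add_left N k)).2.le
        set Z : ℕ → EuclideanSpace ℝ (Fin n) :=
          fun k => (T k)⁻¹ • (g (y + T k • w) - g y) with hZdef
        have hZbd : ∀ k, Z k ∈ Metric.closedBall (0 : EuclideanSpace ℝ (Fin n)) (K * ‖w‖) := by
          intro k
          rw [Metric.mem_closedBall, dist_zero_right, hZdef]
          simp only [norm_smul, Real.norm_eq_abs, abs_inv, abs_of_pos (hTpos k)]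
          have hd : ‖g (y + T k • w) - g y‖ ≤ K * ‖y + T k • w - y‖ := by
            have h := hlip.dist_le_mul _ (hmemT k) _ hyΩ
            simpa [dist_eq_norm] using h
          have he : ‖y + T k • w - y‖ = T k * ‖w‖ := by
            rw [show y + T k • w - y = T k • w by abel, norm_smul, Real.norm_eq_abs,
              abs_of_pos (hTpos k)]
          rw [he] at hd
          rw [inv_mul_le_iff₀ (hTpos k)]
          exact hd.trans_eq (by ring)
        obtain ⟨z, hzball, σ, hσ, hzto⟩ :=
          (isCompact_closedBall (0 : EuclideanSpace ℝ (Fin n)) (K * ‖w‖)).tendsto_subseq hZbd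
        have hcone : (w, z) ∈ contTangentCone
            {p : EuclideanSpace ℝ (Fin n) × EuclideanSpace ℝ (Fin n) |
              p.1 ∈ Ω ∧ p.2 = g p.1} (y, g y) := by
          refine ⟨T ∘ σ, fun k => (w, Z (σ k)), fun k => hTpos _, hTto.comp hσ.tendsto_atTop,
            tendsto_const_nhds.prodMk_nhds hzto, ?_⟩
          intro k
          refine ⟨hmemT (σ k), ?_⟩
          show g y + T (σ k) • Z (σ k) = g (y + T (σ k) • w)
          simp only [hZdef]
          rw [smul_inv_smul₀ (hTpos (σ k)).ne']
          abel
        have hpos := hT y hyΩ w z hcone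
        have hip : ∀ k, ⟪Z k, w⟫ = slope ψ t (s (k + N)) := by
          intro k
          have hv1 : ψ (s (k + N)) = ⟪g (y + T k • w), w⟫ := by
            simp only [hψdef]
            rw [← hyT k]
          have hv2 : ψ t = ⟪g y, w⟫ := by
            simp only [hψdef, hydef]
          rw [slope_def_field, hv1, hv2]
          simp only [hZdef]
          rw [real_inner_smul_left, inner_sub_left,
            show s (k + N) - t = T k from rfl, inv_mul_eq_div]
        have hipσ : ∀ k, ⟪Z (σ k), w⟫ ≤ -r := by
          intro k
          rw [hip (σ k)]
          exact (hN (σ k + N) (Nat.le_add_left N _)).1.1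
        have hlim2 : Tendsto (fun k => ⟪Z (σ k), w⟫) atTop (𝓝 ⟪z, w⟫) :=
          hzto.inner tendsto_const_nhds
        have hfin : ⟪z, w⟫ ≤ -r := le_of_tendsto hlim2 (Filter.Eventually.of_forall hipσ)
        linarith
      have main : ψ a ≤ ψ b :=
        aux_mono_of_dini hab (hψcont.mono (Icc_subset_Icc hamem.1 hbmem.2)) hfreq
      simpa [hψdef] using main
    refine ⟨hΩconv, fun p hp q hq a b ha hb hab => ?_⟩
    set θ : ℝ → ℝ := fun r => φ (p + r • (q - p)) with hθdef
    have hθd : ∀ s ∈ Icc (0:ℝ) 1, HasDerivAt θ ⟪g (p + s • (q - p)), q - p⟫ s :=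
      fun s hs => aux_hasDerivAt_line (hgrad _ (hseg p q hp hq s hs))
    have hθcont : ContinuousOn θ (Icc (0:ℝ) 1) :=
      fun s hs => ((hθd s hs).differentiableAt).continuousAt.continuousWithinAt
    have hθdiff : DifferentiableOn ℝ θ (interior (Icc (0:ℝ) 1)) := by
      rw [interior_Icc]
      exact fun s hs =>
        ((hθd s (Ioo_subset_Icc_self hs)).differentiableAt).differentiableWithinAt
    have hmono : MonotoneOn (deriv θ) (interior (Icc (0:ℝ) 1)) := by
      rw [interior_Icc]
      intro s hs v hv hsv
      rw [(hθd s (Ioo_subset_Icc_self hs)).deriv, (hθd v (Ioo_subset_Icc_self hv)).deriv]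
      exact key p q hp hq s v (Ioo_subset_Icc_self hs) (Ioo_subset_Icc_self hv) hsv
    have hθconv := MonotoneOn.convexOn_of_deriv (convex_Icc 0 1) hθcont hθdiff hmono
    have h2 := hθconv.2 (left_mem_Icc.2 zero_le_one) (right_mem_Icc.2 zero_le_one) ha hb hab
    have e1 : a • (0:ℝ) + b • (1:ℝ) = b := by simp
    have e2 : θ b = φ (a • p + b • q) := by
      simp only [hθdef]
      congr 1
      have hab' : a = 1 - b := by linarith
      rw [hab', sub_smul, one_smul, smul_sub]
      abel
    have e3 : θ 0 = φ p := by simp [hθdef]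
    have e4 : θ 1 = φ q := by simp [hθdef]
    rw [e1, e2, e3, e4] at h2
    simpa [smul_eq_mul] using h2

end
end

section
/- Let Ω ⊆ ℝⁿ be a nonempty open convex set, φ : ℝⁿ → ℝ a function that is (Fréchet) differentiable at every point of Ω with gradient ∇φ Lipschitz continuous on Ω, and κ > 0. Let G := {(u, ∇φ(u)) : u ∈ Ω}. Then φ is strongly convex with modulus κ on Ω (i.e., x ↦ φ(x) − (κ/2)‖x‖² is convex on Ω) if and only if for every x ∈ Ω and every (w,z) ∈ T_G(x, ∇φ(x)), one has ⟨z,w⟩ ≥ κ‖w‖². -/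
open scoped RealInnerProductSpace
open Filter Topology MeasureTheory Set

noncomputable section

variable {n : ℕ}

section AuxSC

local notation "E" => EuclideanSpace ℝ (Fin n)

lemma norm_line_sq (x w : E) (t : ℝ) :
    ‖x + t • w‖ ^ 2 = ‖x‖ ^ 2 + 2 * t * ⟪x, w⟫ + t ^ 2 * ‖w‖ ^ 2 := by
  rw [norm_add_sq_real, real_inner_smul_right, norm_smul, mul_pow, Real.norm_eq_abs, sq_abs]
  ring

lemma hasDerivAt_line_psi (φ : E → ℝ) (κ : ℝ) (x w v : E) (s : ℝ)
    (h : HasGradientAt φ v (x + s • w)) :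
    HasDerivAt (fun t : ℝ => φ (x + t • w) - κ / 2 * ‖x + t • w‖ ^ 2)
      (⟪v, w⟫ - κ * (⟪x, w⟫ + s * ‖w‖ ^ 2)) s := by
  have hline : HasDerivAt (fun t : ℝ => x + t • w) w s := by
    simpa using ((hasDerivAt_id s).smul_const w).const_add x
  have h1 : HasDerivAt (fun t : ℝ => φ (x + t • w)) ⟪v, w⟫ s := by
    have := h.hasFDerivAt.comp_hasDerivAt s hline
    simp [InnerProductSpace.toDual_apply_apply] at this; exact this
  have h2 : HasDerivAt (fun t : ℝ => κ / 2 * ‖x + t • w‖ ^ 2)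
      (κ * (⟪x, w⟫ + s * ‖w‖ ^ 2)) s := by
    have ha : HasDerivAt (fun t : ℝ => 2 * t * ⟪x, w⟫) (2 * ⟪x, w⟫) s := by
      simpa using ((hasDerivAt_id s).const_mul 2).mul_const ⟪x, w⟫
    have hb : HasDerivAt (fun t : ℝ => t ^ 2 * ‖w‖ ^ 2) (2 * s * ‖w‖ ^ 2) s := by
      simpa [pow_one] using (hasDerivAt_pow 2 s).mul_const (‖w‖ ^ 2)
    have hq : HasDerivAt (fun t : ℝ => ‖x‖ ^ 2 + 2 * t * ⟪x, w⟫ + t ^ 2 * ‖w‖ ^ 2)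
        (2 * ⟪x, w⟫ + 2 * s * ‖w‖ ^ 2) s := (ha.const_add (‖x‖ ^ 2)).add hb
    have hp := hq.const_mul (κ / 2)
    have hfun : (fun t : ℝ => κ / 2 * ‖x + t • w‖ ^ 2)
        = fun t : ℝ => κ / 2 * (‖x‖ ^ 2 + 2 * t * ⟪x, w⟫ + t ^ 2 * ‖w‖ ^ 2) := by
      funext t; rw [norm_line_sq]
    rw [hfun]
    exact hp.congr_deriv (by ring)
  exact h1.sub h2

lemma grad_mono (Ω : Set E) (hΩconv : Convex ℝ Ω)
    (φ : E → ℝ) (g : E → E) (hgrad : ∀ x ∈ Ω, HasGradientAt φ (g x) x) (κ : ℝ)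
    (hconv : ConvexOn ℝ Ω (fun x => φ x - κ / 2 * ‖x‖ ^ 2))
    {x u : E} (hx : x ∈ Ω) (hu : u ∈ Ω) :
    κ * ‖u - x‖ ^ 2 ≤ ⟪g u - g x, u - x⟫ := by
  set w := u - x with hw
  have hmem : ∀ t ∈ Icc (0:ℝ) 1, x + t • w ∈ Ω := fun t ht =>
    hΩconv.add_smul_sub_mem hx hu ht
  set F : ℝ → ℝ := fun t => φ (x + t • w) - κ / 2 * ‖x + t • w‖ ^ 2 with hF
  have hder : ∀ s ∈ Icc (0:ℝ) 1, HasDerivAt F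
      (⟪g (x + s • w), w⟫ - κ * (⟪x, w⟫ + s * ‖w‖ ^ 2)) s := fun s hs =>
    hasDerivAt_line_psi φ κ x w _ s (hgrad _ (hmem s hs))
  have hFconv : ConvexOn ℝ (Icc (0:ℝ) 1) F := by
    refine ⟨convex_Icc 0 1, fun s hs r hr a b ha hb hab => ?_⟩
    have key : x + (a * s + b * r) • w = a • (x + s • w) + b • (x + r • w) := by
      have ha' : a = 1 - b := by linarith
      subst ha'
      module
    simp only [hF, smul_eq_mul]
    rw [key]
    have := hconv.2 (hmem s hs) (hmem r hr) ha hb hab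
    simpa [smul_eq_mul] using this
  have hdiff : ∀ s ∈ Icc (0:ℝ) 1, DifferentiableAt ℝ F s := fun s hs =>
    (hder s hs).differentiableAt
  have hmono := hFconv.monotoneOn_deriv hdiff
  have h0 : deriv F 0 = ⟪g (x + (0:ℝ) • w), w⟫ - κ * (⟪x, w⟫ + 0 * ‖w‖ ^ 2) :=
    (hder 0 (left_mem_Icc.2 zero_le_one)).deriv
  have h1 : deriv F 1 = ⟪g (x + (1:ℝ) • w), w⟫ - κ * (⟪x, w⟫ + 1 * ‖w‖ ^ 2) :=
    (hder 1 (right_mem_Icc.2 zero_le_one)).deriv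
  have hm := hmono (left_mem_Icc.2 zero_le_one) (right_mem_Icc.2 zero_le_one) zero_le_one
  rw [h0, h1] at hm
  have hx0 : x + (0:ℝ) • w = x := by simp
  have hx1 : x + (1:ℝ) • w = u := by simp [hw]
  rw [hx0, hx1] at hm
  rw [inner_sub_left]
  linarith [hm]

lemma keyA (Ω : Set E) (hopen : IsOpen Ω)
    (g : E → E) (K : NNReal) (hlip : LipschitzOnWith K g Ω) (κ : ℝ)
    (htang : ∀ x ∈ Ω, ∀ w z : E,
        (w, z) ∈ contTangentCone {p : E × E | p.1 ∈ Ω ∧ p.2 = g p.1} (x, g x) →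
        κ * ‖w‖ ^ 2 ≤ ⟪z, w⟫)
    {y : E} (hy : y ∈ Ω) (w : E) {c : ℝ} (hc : c < κ * ‖w‖ ^ 2) :
    ∀ᶠ t in 𝓝[>] (0:ℝ), c ≤ ⟪g (y + t • w) - g y, w⟫ / t := by
  by_contra hcon
  have hfreq : ∃ᶠ t in 𝓝[>] (0:ℝ), ⟪g (y + t • w) - g y, w⟫ / t < c := by
    simpa [not_le] using (Filter.not_eventually.1 hcon)
  obtain ⟨ε, hε, hball⟩ := Metric.isOpen_iff.1 hopen y hy
  set r := ε / (‖w‖ + 1) with hr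
  have hrpos : 0 < r := div_pos hε (by positivity)
  have hmemΩ : ∀ t : ℝ, 0 < t → t < r → y + t • w ∈ Ω := by
    intro t ht htr
    apply hball
    rw [Metric.mem_ball, dist_eq_norm]
    have hnn : ‖y + t • w - y‖ = t * ‖w‖ := by
      simp [norm_smul, abs_of_pos ht]
    rw [hnn]
    have hwn : (0:ℝ) < ‖w‖ + 1 := by positivity
    calc t * ‖w‖ ≤ t * (‖w‖ + 1) := by nlinarith
      _ < r * (‖w‖ + 1) := by nlinarith
      _ = ε := by rw [hr]; field_simp
  have hex : ∀ k : ℕ, ∃ t : ℝ, (0 < t ∧ t < min (1/((k:ℝ)+1)) r) ∧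
      ⟪g (y + t • w) - g y, w⟫ / t < c := by
    intro k
    have hU : Ioo (0:ℝ) (min (1/(k+1:ℝ)) r) ∈ 𝓝[>] (0:ℝ) :=
      Ioo_mem_nhdsGT (lt_min (by positivity) hrpos)
    obtain ⟨t, hbad, ht⟩ :=
      (hfreq.and_eventually (Filter.eventually_of_mem hU (fun z hz => hz))).exists
    exact ⟨t, ⟨ht.1, ht.2⟩, hbad⟩
  choose t ht hbad using hex
  have htpos : ∀ k, 0 < t k := fun k => (ht k).1
  have htr : ∀ k, t k < r := fun k => lt_of_lt_of_le (ht k).2 (min_le_right _ _)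
  have hmemk : ∀ k, y + t k • w ∈ Ω := fun k => hmemΩ _ (htpos k) (htr k)
  have ht0 : Tendsto t atTop (𝓝 0) := by
    apply squeeze_zero (fun k => (htpos k).le)
      (fun k => ((ht k).2.trans_le (min_le_left _ _)).le)
    exact tendsto_one_div_add_atTop_nhds_zero_nat
  set z : ℕ → E := fun k => (t k)⁻¹ • (g (y + t k • w) - g y) with hz
  have hzball : ∀ k, z k ∈ Metric.closedBall (0:E) (K * ‖w‖) := by
    intro k
    rw [Metric.mem_closedBall, dist_zero_right, hz]
    have hd : ‖g (y + t k • w) - g y‖ ≤ K * (t k * ‖w‖) := by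
      have h2 := hlip.dist_le_mul (y + t k • w) (hmemk k) y hy
      rw [dist_eq_norm, dist_eq_norm] at h2
      simpa [norm_smul, abs_of_pos (htpos k), mul_assoc] using h2
    rw [norm_smul]
    have hti : ‖(t k)⁻¹‖ = (t k)⁻¹ := by
      rw [Real.norm_eq_abs, abs_of_pos (inv_pos.2 (htpos k))]
    rw [hti]
    calc (t k)⁻¹ * ‖g (y + t k • w) - g y‖ ≤ (t k)⁻¹ * (K * (t k * ‖w‖)) :=
          mul_le_mul_of_nonneg_left hd (inv_nonneg.2 (htpos k).le)
      _ = K * ‖w‖ := by field_simp [(htpos k).ne']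
  obtain ⟨z₀, -, σ, hσ, hzz⟩ :=
    tendsto_subseq_of_bounded Metric.isBounded_closedBall hzball
  have htan : (w, z₀) ∈ contTangentCone {p : E × E | p.1 ∈ Ω ∧ p.2 = g p.1} (y, g y) := by
    refine ⟨fun k => t (σ k), fun k => (w, z (σ k)), fun k => htpos _,
      ht0.comp hσ.tendsto_atTop, tendsto_const_nhds.prodMk_nhds hzz, ?_⟩
    intro k
    simp only [Set.mem_setOf_eq, Prod.fst_add, Prod.snd_add, Prod.smul_fst, Prod.smul_snd]
    refine ⟨hmemk _, ?_⟩
    rw [hz]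
    rw [smul_inv_smul₀ (htpos (σ k)).ne']
    abel
  have hineq := htang y hy w z₀ htan
  have hlim : Tendsto (fun k => ⟪z (σ k), w⟫) atTop (𝓝 ⟪z₀, w⟫) :=
    hzz.inner tendsto_const_nhds
  have hle : ∀ k, ⟪z (σ k), w⟫ ≤ c := by
    intro k
    have hb2 := (hbad (σ k)).le
    rw [hz, real_inner_smul_left]
    rwa [div_eq_inv_mul] at hb2
  have hfin : ⟪z₀, w⟫ ≤ c := le_of_tendsto hlim (Eventually.of_forall hle)
  linarith

lemma stepB (Ω : Set E) (g : E → E) (K : NNReal) (hlip : LipschitzOnWith K g Ω)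
    (x w : E) (a b c : ℝ) (hab : a ≤ b)
    (hseg : ∀ s ∈ Icc a b, x + s • w ∈ Ω)
    (hkey : ∀ y ∈ Ω, ∀ᶠ t in 𝓝[>] (0:ℝ), c ≤ ⟪g (y + t • w) - g y, w⟫ / t) :
    ⟪g (x + a • w), w⟫ + c * (b - a) ≤ ⟪g (x + b • w), w⟫ := by
  set f : ℝ → ℝ := fun s => -⟪g (x + s • w), w⟫ with hf
  have hfc : ContinuousOn f (Icc a b) := by
    apply ContinuousOn.neg
    apply ContinuousOn.inner ?_ continuousOn_const
    exact hlip.continuousOn.comp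
      ((continuous_const.add (continuous_id.smul continuous_const)).continuousOn) hseg
  set B : ℝ → ℝ := fun s => f a - c * (s - a) with hB
  have hBa : f a ≤ B a := by simp [hB]
  have hBc : ContinuousOn B (Icc a b) :=
    continuousOn_const.sub (continuousOn_const.mul (continuousOn_id.sub continuousOn_const))
  have hB' : ∀ s ∈ Ico a b, HasDerivWithinAt B (-c) (Ici s) s := by
    intro s hs
    have hd : HasDerivWithinAt (fun s : ℝ => f a - c * (s - a)) (0 - c * 1) (Ici s) s :=
      (hasDerivWithinAt_const s _ (f a)).sub
        (((hasDerivWithinAt_id s _).sub_const a).const_mul c)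
    simpa using hd
  have bound : ∀ s ∈ Ico a b, ∀ r, -c < r → ∃ᶠ zz in 𝓝[>] s, slope f s zz < r := by
    intro s hs r hr
    have hyΩ : x + s • w ∈ Ω := hseg s ⟨hs.1, hs.2.le⟩
    have hev := hkey _ hyΩ
    have hmap : Tendsto (fun zz : ℝ => zz - s) (𝓝[>] s) (𝓝[>] (0:ℝ)) := by
      rw [tendsto_nhdsWithin_iff]
      constructor
      · have h2 : Tendsto (fun zz : ℝ => zz - s) (𝓝 s) (𝓝 (s - s)) :=
          (continuous_id.sub continuous_const).tendsto s
        rw [sub_self] at h2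
        exact h2.mono_left nhdsWithin_le_nhds
      · filter_upwards [self_mem_nhdsWithin] with zz hzz
        exact sub_pos.2 (mem_Ioi.1 hzz)
    have hev2 : ∀ᶠ zz in 𝓝[>] s, slope f s zz < r := by
      filter_upwards [hmap.eventually hev, self_mem_nhdsWithin] with zz hzz hzs
      have hzspos : (0:ℝ) < zz - s := sub_pos.2 (mem_Ioi.1 hzs)
      have hxz : x + zz • w = (x + s • w) + (zz - s) • w := by
        rw [sub_smul]; abel
      have hA : c * (zz - s) ≤
          ⟪g ((x + s • w) + (zz - s) • w) - g (x + s • w), w⟫ :=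
        (le_div_iff₀ hzspos).mp hzz
      rw [inner_sub_left] at hA
      rw [slope_def_field]
      simp only [hf]
      rw [hxz, div_lt_iff₀ hzspos]
      have hmul := mul_lt_mul_of_pos_right hr hzspos
      linarith
    exact hev2.frequently
  have hres := image_le_of_liminf_slope_right_le_deriv_boundary (B' := fun _ => -c)
    hfc hBa hBc hB' bound (right_mem_Icc.2 hab)
  simp only [hf, hB] at hres
  linarith

end AuxSC

/-- strong convexity on an open convex set characterized via tangent
cones to the graph of the gradient. -/
theorem statement6 (n : ℕ) (Ω : Set (EuclideanSpace ℝ (Fin n)))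
    (hne : Ω.Nonempty) (hopen : IsOpen Ω) (hΩconv : Convex ℝ Ω)
    (φ : EuclideanSpace ℝ (Fin n) → ℝ) (g : EuclideanSpace ℝ (Fin n) → EuclideanSpace ℝ (Fin n))
    (hgrad : ∀ x ∈ Ω, HasGradientAt φ (g x) x)
    (K : NNReal) (hlip : LipschitzOnWith K g Ω) (κ : ℝ) (hκ : 0 < κ) :
    ConvexOn ℝ Ω (fun x => φ x - κ / 2 * ‖x‖ ^ 2) ↔
      ∀ x ∈ Ω, ∀ w z : EuclideanSpace ℝ (Fin n),
        (w, z) ∈ contTangentCone {p : EuclideanSpace ℝ (Fin n) × EuclideanSpace ℝ (Fin n) | p.1 ∈ Ω ∧ p.2 = g p.1} (x, g x) →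
        κ * ‖w‖ ^ 2 ≤ ⟪z, w⟫ := by
  constructor
  · intro hconv x hx w z htan
    obtain ⟨t, ws, htpos, ht0, hws, hmem⟩ := htan
    have hw1 : Tendsto (fun k => (ws k).1) atTop (𝓝 w) :=
      (continuous_fst.tendsto _).comp hws
    have hw2 : Tendsto (fun k => (ws k).2) atTop (𝓝 z) :=
      (continuous_snd.tendsto _).comp hws
    have hineq : ∀ k, κ * ‖(ws k).1‖ ^ 2 ≤ ⟪(ws k).2, (ws k).1⟫ := by
      intro k
      have hm := hmem k
      simp only [Set.mem_setOf_eq, Prod.fst_add, Prod.snd_add, Prod.smul_fst,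
        Prod.smul_snd] at hm
      obtain ⟨hΩk, hgk⟩ := hm
      have hmono := grad_mono Ω hΩconv φ g hgrad κ hconv hx hΩk
      have hu : (x + t k • (ws k).1) - x = t k • (ws k).1 := by abel
      rw [hu, ← hgk] at hmono
      have hgsub : g x + t k • (ws k).2 - g x = t k • (ws k).2 := by abel
      rw [hgsub, real_inner_smul_left, real_inner_smul_right, norm_smul,
        Real.norm_eq_abs, abs_of_pos (htpos k), mul_pow] at hmono
      have h2 := htpos k
      have h3 : t k ^ 2 * (κ * ‖(ws k).1‖ ^ 2) ≤ t k ^ 2 * ⟪(ws k).2, (ws k).1⟫ := by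
        nlinarith [hmono]
      exact (mul_le_mul_iff_right₀ (pow_pos h2 2)).mp h3
    have hl1 : Tendsto (fun k => κ * ‖(ws k).1‖ ^ 2) atTop (𝓝 (κ * ‖w‖ ^ 2)) :=
      ((hw1.norm).pow 2).const_mul κ
    have hl2 : Tendsto (fun k => ⟪(ws k).2, (ws k).1⟫) atTop (𝓝 ⟪z, w⟫) :=
      hw2.inner hw1
    exact le_of_tendsto_of_tendsto' hl1 hl2 hineq
  · intro htang
    have hkey : ∀ (w : EuclideanSpace ℝ (Fin n)) (c : ℝ), c < κ * ‖w‖ ^ 2 →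
        ∀ y ∈ Ω, ∀ᶠ t in 𝓝[>] (0:ℝ), c ≤ ⟪g (y + t • w) - g y, w⟫ / t :=
      fun w c hc y hy => keyA Ω hopen g K hlip κ htang hy w hc
    refine ⟨hΩconv, ?_⟩
    intro x hx u hu a b ha hb hab
    set w := u - x with hwdef
    have hmemt : ∀ s ∈ Icc (0:ℝ) 1, x + s • w ∈ Ω := fun s hs =>
      hΩconv.add_smul_sub_mem hx hu hs
    set F : ℝ → ℝ := fun s => φ (x + s • w) - κ / 2 * ‖x + s • w‖ ^ 2 with hF
    have hder : ∀ s ∈ Icc (0:ℝ) 1, HasDerivAt F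
        (⟪g (x + s • w), w⟫ - κ * (⟪x, w⟫ + s * ‖w‖ ^ 2)) s := fun s hs =>
      hasDerivAt_line_psi φ κ x w _ s (hgrad _ (hmemt s hs))
    have hstep : ∀ s₁ s₂ : ℝ, 0 ≤ s₁ → s₁ ≤ s₂ → s₂ ≤ 1 →
        ⟪g (x + s₁ • w), w⟫ + κ * ‖w‖ ^ 2 * (s₂ - s₁) ≤ ⟪g (x + s₂ • w), w⟫ := by
      intro s₁ s₂ h0 h12 h1
      have hseg : ∀ s ∈ Icc s₁ s₂, x + s • w ∈ Ω := fun s hs =>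
        hmemt s ⟨h0.trans hs.1, hs.2.trans h1⟩
      by_contra hcon
      push_neg at hcon
      have hne : s₁ < s₂ := by
        rcases h12.lt_or_eq with h | rfl
        · exact h
        · simp at hcon
      have hd : 0 < s₂ - s₁ := sub_pos.2 hne
      have hclt : (⟪g (x + s₂ • w), w⟫ - ⟪g (x + s₁ • w), w⟫) / (s₂ - s₁)
          < κ * ‖w‖ ^ 2 := by
        rw [div_lt_iff₀ hd]
        linarith
      obtain ⟨c, hc1, hc2⟩ := exists_between hclt
      have hB := stepB Ω g K hlip x w s₁ s₂ c hne.le hseg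
        (fun y hy => hkey w c hc2 y hy)
      rw [div_lt_iff₀ hd] at hc1
      linarith
    have hFconv : ConvexOn ℝ (Icc (0:ℝ) 1) F := by
      apply MonotoneOn.convexOn_of_deriv (convex_Icc 0 1)
      · exact fun s hs => (hder s hs).differentiableAt.continuousAt.continuousWithinAt
      · rw [interior_Icc]
        exact fun s hs =>
          ((hder s (Ioo_subset_Icc_self hs)).differentiableAt).differentiableWithinAt
      · rw [interior_Icc]
        intro s₁ hs₁ s₂ hs₂ h12
        rw [(hder s₁ (Ioo_subset_Icc_self hs₁)).deriv,
          (hder s₂ (Ioo_subset_Icc_self hs₂)).deriv]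
        have := hstep s₁ s₂ hs₁.1.le h12 hs₂.2.le
        nlinarith [this]
    have h01 : (0:ℝ) ∈ Icc (0:ℝ) 1 := left_mem_Icc.2 zero_le_one
    have h11 : (1:ℝ) ∈ Icc (0:ℝ) 1 := right_mem_Icc.2 zero_le_one
    have hcomb := hFconv.2 h01 h11 ha hb hab
    simp only [smul_eq_mul, mul_zero, mul_one, zero_add] at hcomb
    have e0 : x + (0:ℝ) • w = x := by simp
    have e1 : x + (1:ℝ) • w = u := by simp [hwdef]
    have eb : x + b • w = a • x + b • u := by
      have ha' : a = 1 - b := by linarith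
      subst ha'
      rw [hwdef]
      module
    simp only [hF, e0, e1, eb] at hcomb
    simpa [smul_eq_mul] using hcomb

end
end
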